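/- Let α ∈ 𝔇^{(z)}_{σ₁,σ₂}(W), u ∈ V^{(j₁,j₂)}, v ∈ V^{(r₁,r₂)} (j₁,j₂,r₁,r₂ ∈ ℤ), and n ∈ ℤ. Then there exists k ∈ ℕ such that (x₁−z)^{k+j₁/T}(x₂−z)^{n+r₁/T} Y_W^*(u,x₁)Y_W^*(v,x₂)α ∈ x₂^{−r₂/T} x₁^{−j₂/T} W^*((x₁))[[x₂, x₂^{-1}]]. Furthermore, x^{r₂/T}(x−z)^{n+r₁/T} Y_W^*(v,x)α ∈ 𝔇^{(z)}_{σ₁,σ₂}(W)[[x, x^{-1}]], i.e., every coefficient of this series lies in 𝔇^{(z)}_{σ₁,σ₂}(W). -/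

import Mathlib

open scoped BigOperators

noncomputable section

/-- The generalized binomial coefficient `binom(a, n)` for `a : ℂ`, `n : ℕ`. -/
def cbinom (a : ℂ) (n : ℕ) : ℂ := (∏ i ∈ Finset.range n, (a - (i : ℂ))) / (n.factorial : ℂ)

/-- The argument of a complex number normalized to lie in `[0, 2π)`. -/
def argB (ξ : ℂ) : ℝ := if 0 ≤ Complex.arg ξ then Complex.arg ξ else Complex.arg ξ + 2 * Real.pi

/-- The branch of the logarithm with `log ξ = ln |ξ| + i arg ξ`, `0 ≤ arg ξ < 2π`. -/
def logB (ξ : ℂ) : ℂ := (Real.log ‖ξ‖ : ℂ) + (argB ξ : ℂ) * Complex.I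

/-- `ξ ^ α = e^{α log ξ}` with the chosen branch of `log`. -/
def bpow (ξ α : ℂ) : ℂ := Complex.exp (α * logB ξ)

/-- `e^{α π i}`. -/
def epi (α : ℂ) : ℂ := Complex.exp (α * (Real.pi : ℂ) * Complex.I)

/-!  Formal series are recorded by the coefficient function `f : ℂ → ·`, where `f n` is the
coefficient of `x^{-n-1}`.  The following are the coefficients of the products with
`(x-z)^β`, `(z-x)^β`, `(x+z)^β`, `(z+x)^β` (with the expansion conventions
`(x ± ξ)^β = Σ_{j≥0} binom(β,j) (±ξ)^j x^{β-j}` and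
`(ξ ± x)^β = Σ_{j≥0} binom(β,j) ξ^{β-j} (±x)^j`, where `ξ^γ` uses the chosen branch),
and of the substitution `f(x+z)`. -/

/-- Coefficient of `x^{-n-1}` in `(x-z)^β f(x)`. -/
def mulXZ (z β : ℂ) (f : ℂ → ℂ) (n : ℂ) : ℂ :=
  ∑ᶠ i : ℕ, cbinom β i * (-z) ^ i * f (n + β - (i : ℂ))

/-- Coefficient of `x^{-n-1}` in `(z-x)^β f(x)`. -/
def mulZX (z β : ℂ) (f : ℂ → ℂ) (n : ℂ) : ℂ :=
  ∑ᶠ i : ℕ, cbinom β i * bpow z (β - (i : ℂ)) * (-1 : ℂ) ^ i * f (n + (i : ℂ))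

/-- Coefficient of `x^{-n-1}` in `(x+z)^β f(x)`. -/
def mulXpZ (z β : ℂ) (f : ℂ → ℂ) (n : ℂ) : ℂ :=
  ∑ᶠ i : ℕ, cbinom β i * z ^ i * f (n + β - (i : ℂ))

/-- Coefficient of `x^{-n-1}` in `(z+x)^β f(x)`. -/
def mulZpX (z β : ℂ) (f : ℂ → ℂ) (n : ℂ) : ℂ :=
  ∑ᶠ i : ℕ, cbinom β i * bpow z (β - (i : ℂ)) * f (n + (i : ℂ))

/-- Coefficient of `x^{-n-1}` in `f(x+z) = (e^{z d/dx} f)(x)`. -/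
def substZ (z : ℂ) (f : ℂ → ℂ) (n : ℂ) : ℂ :=
  ∑ᶠ i : ℕ, cbinom ((i : ℂ) - n - 1) i * z ^ i * f (n - (i : ℂ))

/-- A vertex algebra over `ℂ`, presented by its components `Y u n = u_n`, with the
Jacobi identity in (componentwise) Borcherds form. -/
structure VertexAlg (V : Type*) [AddCommGroup V] [Module ℂ V] where
  Y : V →ₗ[ℂ] ℤ → V →ₗ[ℂ] V
  one : V
  trunc : ∀ u v : V, ∃ N : ℤ, ∀ n : ℤ, N ≤ n → Y u n v = 0
  vacuum_eq : ∀ (n : ℤ) (v : V), Y one n v = if n = -1 then v else 0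
  create : ∀ (u : V) (n : ℤ), 0 ≤ n → Y u n one = 0
  create' : ∀ u : V, Y u (-1) one = u
  jacobi : ∀ (u v w : V) (a b c : ℤ),
    (∑ᶠ i : ℕ, ((-1 : ℂ) ^ i * cbinom (a : ℂ) i) •
      (Y u (a + b - (i : ℤ)) (Y v (c + (i : ℤ)) w)
        - ((-1 : ℂ) ^ a) • Y v (a + c - (i : ℤ)) (Y u (b + (i : ℤ)) w)))
    = ∑ᶠ i : ℕ, cbinom (b : ℂ) i • Y (Y u (a + (i : ℤ)) v) (b + c - (i : ℤ)) w

/-- An automorphism of a vertex algebra. -/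
structure VAAut {V : Type*} [AddCommGroup V] [Module ℂ V] (A : VertexAlg V) where
  g : V ≃ₗ[ℂ] V
  map_one : g A.one = A.one
  map_Y : ∀ (u : V) (n : ℤ) (v : V), g (A.Y u n v) = A.Y (g u) n (g v)

/-- `v` lies in the eigenspace `V^j = {v | σ v = e^{2πij/T} v}`. -/
def eig {V : Type*} [AddCommGroup V] [Module ℂ V] {A : VertexAlg V}
    (σ : VAAut A) (T : ℕ) (j : ℤ) (v : V) : Prop :=
  σ.g v = Complex.exp (2 * (Real.pi : ℂ) * Complex.I * (j : ℂ) / (T : ℂ)) • v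

/-- A (weak) `σ`-twisted module for a vertex algebra, presented componentwise:
`Y v n` is the coefficient of `x^{-n-1}` in `Y_W(v,x)`; the `σ`-twisted Jacobi
identity is stated coefficientwise. -/
structure TwistedModule {V : Type*} [AddCommGroup V] [Module ℂ V]
    (W : Type*) [AddCommGroup W] [Module ℂ W]
    (A : VertexAlg V) (σ : VAAut A) (T : ℕ) where
  Y : V →ₗ[ℂ] ℂ → W →ₗ[ℂ] W
  vacuum_eq : ∀ (n : ℂ) (w : W), Y A.one n w = if n = -1 then w else 0
  latt : ∀ (v : V) (n : ℂ), (∀ m : ℤ, n ≠ (m : ℂ) / (T : ℂ)) → Y v n = 0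
  eig_supp : ∀ (j : ℤ) (v : V), eig σ T j v →
    ∀ n : ℂ, (∀ m : ℤ, n ≠ (j : ℂ) / (T : ℂ) + (m : ℂ)) → Y v n = 0
  trunc : ∀ (v : V) (w : W), ∃ N : ℤ, ∀ m : ℤ, N ≤ m → Y v ((m : ℂ) / (T : ℂ)) w = 0
  jacobi : ∀ (j : ℤ) (u : V), eig σ T j u → ∀ (v : V) (w : W) (a b c : ℤ),
    (∑ᶠ i : ℕ, ((-1 : ℂ) ^ i * cbinom (a : ℂ) i) •
      (Y u ((a : ℂ) + (b : ℂ) / (T : ℂ) - (i : ℂ)) (Y v ((c : ℂ) / (T : ℂ) + (i : ℂ)) w)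
        - ((-1 : ℂ) ^ a) •
          Y v ((a : ℂ) + (c : ℂ) / (T : ℂ) - (i : ℂ)) (Y u ((b : ℂ) / (T : ℂ) + (i : ℂ)) w)))
    = if (T : ℤ) ∣ (b - j) then
        (∑ᶠ i : ℕ, cbinom ((b : ℂ) / (T : ℂ)) i •
          Y (A.Y u (a + (i : ℤ)) v) ((b : ℂ) / (T : ℂ) + (c : ℂ) / (T : ℂ) - (i : ℂ)) w)
      else 0

/-- A right `σ`-twisted module for a vertex algebra, presented componentwise
(opposite twisted Jacobi identity, coefficientwise). -/
structure RightTwistedModule {V : Type*} [AddCommGroup V] [Module ℂ V]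
    (W : Type*) [AddCommGroup W] [Module ℂ W]
    (A : VertexAlg V) (σ : VAAut A) (T : ℕ) where
  Y : V →ₗ[ℂ] ℂ → W →ₗ[ℂ] W
  vacuum_eq : ∀ (n : ℂ) (w : W), Y A.one n w = if n = -1 then w else 0
  latt : ∀ (v : V) (n : ℂ), (∀ m : ℤ, n ≠ (m : ℂ) / (T : ℂ)) → Y v n = 0
  trunc : ∀ (v : V) (w : W), ∃ N : ℤ, ∀ m : ℤ, m ≤ N → Y v ((m : ℂ) / (T : ℂ)) w = 0
  jacobi : ∀ (j : ℤ) (u : V), eig σ T j u → ∀ (v : V) (w : W) (a b c : ℤ),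
    (∑ᶠ i : ℕ, ((-1 : ℂ) ^ i * cbinom (a : ℂ) i) •
      (Y v ((c : ℂ) / (T : ℂ) + (i : ℂ)) (Y u ((a : ℂ) + (b : ℂ) / (T : ℂ) - (i : ℂ)) w)
        - ((-1 : ℂ) ^ a) •
          Y u ((b : ℂ) / (T : ℂ) + (i : ℂ)) (Y v ((a : ℂ) + (c : ℂ) / (T : ℂ) - (i : ℂ)) w)))
    = if (T : ℤ) ∣ (b + j) then
        (∑ᶠ i : ℕ, cbinom ((b : ℂ) / (T : ℂ)) i •
          Y (A.Y u (a + (i : ℤ)) v) ((b : ℂ) / (T : ℂ) + (c : ℂ) / (T : ℂ) - (i : ℂ)) w)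
      else 0

section DualSetup

variable {V : Type*} [AddCommGroup V] [Module ℂ V] {W : Type*} [AddCommGroup W] [Module ℂ W]
variable {A : VertexAlg V}

/-- The series `Y_W^*(v,x)α` paired with `w ∈ W`:  `m ↦ ⟨α, (Y_W v)_m w⟩`. -/
def Ydual (YW : V →ₗ[ℂ] ℂ → W →ₗ[ℂ] W) (v : V) (α : W → ℂ) (w : W) : ℂ → ℂ :=
  fun m => α (YW v m w)

/-- The condition `x^{j₂/T}(x-z)^{k+j₁/T} Y_W^*(v,x)α ∈ W^*((x))` (integer exponents and
lower truncation in `x`, uniformly in `w`). -/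
def DCond (T : ℕ) (z : ℂ) (j₁ j₂ : ℤ) (YW : V →ₗ[ℂ] ℂ → W →ₗ[ℂ] W)
    (v : V) (α : W → ℂ) (k : ℕ) : Prop :=
  (∀ n : ℂ, (∀ m : ℤ, n ≠ (m : ℂ)) → ∀ w : W,
    mulXZ z ((k : ℂ) + (j₁ : ℂ) / (T : ℂ)) (Ydual YW v α w) (n + (j₂ : ℂ) / (T : ℂ)) = 0) ∧
  (∃ N : ℤ, ∀ m : ℤ, N ≤ m → ∀ w : W,
    mulXZ z ((k : ℂ) + (j₁ : ℂ) / (T : ℂ)) (Ydual YW v α w) ((m : ℂ) + (j₂ : ℂ) / (T : ℂ)) = 0)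

/-- The space `𝔇^{(z)}_{σ₁,σ₂}(W) ⊆ W^*`:  linear functionals `α` such that for every
`v ∈ V^{(j₁,j₂)}` there is `k ∈ ℕ` with `x^{j₂/T}(x-z)^{k+j₁/T} Y_W^*(v,x)α ∈ W^*((x))`. -/
def Dspace (σ₁ σ₂ : VAAut A) (T : ℕ) (YW : V →ₗ[ℂ] ℂ → W →ₗ[ℂ] W) (z : ℂ) :
    Set (W → ℂ) :=
  { α | IsLinearMap ℂ α ∧ ∀ (j₁ j₂ : ℤ) (v : V), eig σ₁ T j₁ v → eig σ₂ T j₂ v →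
      ∃ k : ℕ, DCond T z j₁ j₂ YW v α k }

/-- `YR` is the operation `Y_σ^R` on `𝔇^{(z)}_{σ₁,σ₂}(W)`:  it is linear in `v`, for
`v ∈ V^{(j₁,j₂)}` and `α ∈ 𝔇` the series `Y_σ^R(v,x)α` has exponent support in
`x^{-j₂/T}(·)((x))`-form, and for every admissible `k ∈ ℕ`
`e^{(k+j₁/T)πi}(z-x)^{k+j₁/T} Y_σ^R(v,x)α = (x-z)^{k+j₁/T} Y_W^*(v,x)α`. -/
def IsYR (σ₁ σ₂ : VAAut A) (T : ℕ) (YW : V →ₗ[ℂ] ℂ → W →ₗ[ℂ] W) (z : ℂ)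
    (YR : V → ℂ → (W → ℂ) → W → ℂ) : Prop :=
  (∀ (n : ℂ) (α : W → ℂ), IsLinearMap ℂ fun v => YR v n α) ∧
  (∀ (j₁ j₂ : ℤ) (v : V), eig σ₁ T j₁ v → eig σ₂ T j₂ v →
    ∀ α ∈ Dspace σ₁ σ₂ T YW z,
      (∀ n : ℂ, (∀ m : ℤ, n ≠ (j₂ : ℂ) / (T : ℂ) + (m : ℂ)) → YR v n α = 0) ∧
      (∃ N : ℤ, ∀ m : ℤ, N ≤ m → YR v ((j₂ : ℂ) / (T : ℂ) + (m : ℂ)) α = 0) ∧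
      (∀ k : ℕ, DCond T z j₁ j₂ YW v α k → ∀ (n : ℂ) (w : W),
        epi ((k : ℂ) + (j₁ : ℂ) / (T : ℂ)) *
            mulZX z ((k : ℂ) + (j₁ : ℂ) / (T : ℂ)) (fun m => YR v m α w) n
          = mulXZ z ((k : ℂ) + (j₁ : ℂ) / (T : ℂ)) (Ydual YW v α w) n))

/-- The condition `x^{j₁/T}(x+z)^{l+j₂/T} Y_W^*(v,x+z)α ∈ W^*((x))`. -/
def LCond (T : ℕ) (z : ℂ) (j₁ j₂ : ℤ) (YW : V →ₗ[ℂ] ℂ → W →ₗ[ℂ] W)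
    (v : V) (α : W → ℂ) (l : ℕ) : Prop :=
  (∀ n : ℂ, (∀ m : ℤ, n ≠ (m : ℂ)) → ∀ w : W,
    mulXpZ z ((l : ℂ) + (j₂ : ℂ) / (T : ℂ)) (substZ z (Ydual YW v α w))
      (n + (j₁ : ℂ) / (T : ℂ)) = 0) ∧
  (∃ N : ℤ, ∀ m : ℤ, N ≤ m → ∀ w : W,
    mulXpZ z ((l : ℂ) + (j₂ : ℂ) / (T : ℂ)) (substZ z (Ydual YW v α w))
      ((m : ℂ) + (j₁ : ℂ) / (T : ℂ)) = 0)

/-- `YL` is the operation `Y_σ^L` on `𝔇^{(z)}_{σ₁,σ₂}(W)`:  linear in `v`, with exponent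
support in `x^{-j₁/T}(·)((x))`-form, and
`(z+x)^{l+j₂/T} Y_σ^L(v,x)α = (x+z)^{l+j₂/T} Y_W^*(v,x+z)α` for every admissible `l ∈ ℕ`. -/
def IsYL (σ₁ σ₂ : VAAut A) (T : ℕ) (YW : V →ₗ[ℂ] ℂ → W →ₗ[ℂ] W) (z : ℂ)
    (YL : V → ℂ → (W → ℂ) → W → ℂ) : Prop :=
  (∀ (n : ℂ) (α : W → ℂ), IsLinearMap ℂ fun v => YL v n α) ∧
  (∀ (j₁ j₂ : ℤ) (v : V), eig σ₁ T j₁ v → eig σ₂ T j₂ v →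
    ∀ α ∈ Dspace σ₁ σ₂ T YW z,
      (∀ n : ℂ, (∀ m : ℤ, n ≠ (j₁ : ℂ) / (T : ℂ) + (m : ℂ)) → YL v n α = 0) ∧
      (∃ N : ℤ, ∀ m : ℤ, N ≤ m → YL v ((j₁ : ℂ) / (T : ℂ) + (m : ℂ)) α = 0) ∧
      (∀ l : ℕ, LCond T z j₁ j₂ YW v α l → ∀ (n : ℂ) (w : W),
        mulZpX z ((l : ℂ) + (j₂ : ℂ) / (T : ℂ)) (fun m => YL v m α w) n
          = mulXpZ z ((l : ℂ) + (j₂ : ℂ) / (T : ℂ)) (substZ z (Ydual YW v α w)) n))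

end DualSetup
/-! ### Auxiliary lemmas on `cbinom` and finite sums -/

open Finset Polynomial in
private lemma descPochhammer_smeval_eq_prod' (a : ℂ) (n : ℕ) :
    (descPochhammer ℤ n).smeval a = ∏ i ∈ Finset.range n, (a - (i : ℂ)) := by
  induction n with
  | zero => simp [descPochhammer_zero, Polynomial.smeval_one]
  | succ n ih =>
      rw [descPochhammer_succ_right, Polynomial.smeval_mul, ih, Finset.prod_range_succ,
        Polynomial.smeval_sub, Polynomial.smeval_X, Polynomial.smeval_natCast]
      simp

private lemma cbinom_eq_choose (a : ℂ) (n : ℕ) : cbinom a n = Ring.choose a n := by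
  have h := Ring.descPochhammer_eq_factorial_smul_choose a n
  rw [descPochhammer_smeval_eq_prod'] at h
  rw [cbinom, h, nsmul_eq_mul, mul_div_cancel_left₀]
  exact_mod_cast Nat.factorial_ne_zero n

private lemma cbinom_zero' (a : ℂ) : cbinom a 0 = 1 := by simp [cbinom]

private lemma cbinom_pascal (a : ℂ) (k : ℕ) : cbinom (a+1) (k+1) = cbinom a k + cbinom a (k+1) := by
  simp [cbinom_eq_choose, Ring.choose_succ_succ]

private lemma cbinom_mul_nat (a : ℂ) (i t : ℕ) (h : t ≤ i) :
    cbinom a i * (i.choose t : ℂ) = cbinom a t * cbinom (a - t) (i - t) := by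
  have h2 := Ring.choose_smul_choose a (n := i) (k := t) h
  rw [nsmul_eq_mul] at h2
  simp only [cbinom_eq_choose]
  rw [mul_comm, ← h2]

private lemma cbinom_vandermonde (x y : ℂ) (r : ℕ) :
    ∑ i ∈ Finset.range (r+1), cbinom x i * cbinom y (r - i) = cbinom (x+y) r := by
  have h := Ring.add_choose_eq (r := x) (s := y) r (Commute.all _ _)
  rw [Finset.Nat.sum_antidiagonal_eq_sum_range_succ
    (fun a b => Ring.choose x a * Ring.choose y b)] at h
  simp only [cbinom_eq_choose]
  exact h.symm

private lemma cbinom_zero_left (i : ℕ) : cbinom 0 (i+1) = 0 := by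
  rw [cbinom, Finset.prod_eq_zero (Finset.mem_range.2 (Nat.succ_pos i))]
  · simp
  · simp

private lemma cbinom_neg_one (i : ℕ) : cbinom (-1) i = (-1)^i := by
  have h : ∏ s ∈ Finset.range i, ((-1 : ℂ) - s) = (-1)^i * (i.factorial : ℂ) := by
    induction i with
    | zero => simp
    | succ n ih =>
        rw [Finset.prod_range_succ, ih, Nat.factorial_succ]
        push_cast
        ring
  rw [cbinom, h, mul_div_assoc, div_self, mul_one]
  exact_mod_cast Nat.factorial_ne_zero i

private lemma finsum_eq_sum_range {γ : Type*} [AddCommMonoid γ] {f : ℕ → γ} {M : ℕ}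
    (h : ∀ i, M ≤ i → f i = 0) :
    ∑ᶠ i, f i = ∑ i ∈ Finset.range M, f i := by
  apply finsum_eq_sum_of_support_subset
  intro i hi
  simp only [Function.mem_support] at hi
  simp only [Finset.coe_range, Set.mem_Iio]
  by_contra hc
  exact hi (h i (Nat.le_of_not_lt hc))

private lemma hockey (i t : ℕ) : ∑ s ∈ Finset.range i, (s.choose t : ℂ) = (i.choose (t+1) : ℂ) := by
  induction i with
  | zero => simp
  | succ n ih => rw [Finset.sum_range_succ, ih, Nat.choose_succ_succ n t]; push_cast; ring

private lemma newton (l : ℕ) : ∀ B : ℂ, ∃ d : ℕ → ℂ, ∀ i : ℕ,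
    cbinom (B - i) l = ∑ t ∈ Finset.range (l+1), d t * (i.choose t : ℂ) := by
  induction l with
  | zero =>
      intro B
      refine ⟨fun _ => 1, fun i => ?_⟩
      simp [cbinom_zero']
  | succ l ih =>
      intro B
      obtain ⟨d', hd'⟩ := ih (B - 1)
      refine ⟨fun t => match t with | 0 => cbinom B (l+1) | (t+1) => -d' t, fun i => ?_⟩
      have key : ∀ j : ℕ, cbinom (B - (j+1:ℕ)) (l+1) - cbinom (B - j) (l+1)
          = -(cbinom (B - 1 - j) l) := by
        intro j
        have hp := cbinom_pascal (B - 1 - j) l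
        have h1 : B - 1 - (j:ℂ) + 1 = B - j := by ring
        have h2 : B - ((j:ℕ)+1:ℕ) = B - 1 - (j:ℂ) := by push_cast; ring
        rw [h1] at hp
        rw [h2, hp]
        ring
      have tele : cbinom (B - i) (l+1) = cbinom B (l+1)
          + ∑ j ∈ Finset.range i, (cbinom (B - (j+1:ℕ)) (l+1) - cbinom (B - j) (l+1)) := by
        rw [Finset.sum_range_sub (fun j => cbinom (B - j) (l+1))]
        simp
      rw [tele]
      have h3 : ∀ j ∈ Finset.range i, cbinom (B - (j+1:ℕ)) (l+1) - cbinom (B - j) (l+1)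
          = ∑ t ∈ Finset.range (l+1), -(d' t * (j.choose t : ℂ)) := by
        intro j _
        rw [key j, hd' j, ← Finset.sum_neg_distrib]
      rw [Finset.sum_congr rfl h3, Finset.sum_comm]
      rw [Finset.sum_range_succ'
        (fun t => (match t with | 0 => cbinom B (l+1) | (t+1) => -d' t) * (i.choose t : ℂ))]
      simp only [Nat.choose_zero_right, Nat.cast_one, mul_one]
      have h4 : ∀ t ∈ Finset.range (l+1), ∑ j ∈ Finset.range i, -(d' t * (j.choose t : ℂ))
          = -d' t * (i.choose (t+1) : ℂ) := by
        intro t _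
        rw [Finset.sum_neg_distrib, ← Finset.mul_sum, hockey]
        ring
      rw [Finset.sum_congr rfl h4]
      ring

open Finset in
private lemma conv_lemma (φ ψ G : ℕ → ℂ) (A B S : ℕ) (hSA : S ≤ A) (hSB : S ≤ B)
    (hG : ∀ r, S ≤ r → G r = 0) :
    ∑ i ∈ range A, ∑ j ∈ range B, φ i * ψ j * G (i+j)
      = ∑ r ∈ range S, (∑ q ∈ range (r+1), φ q * ψ (r-q)) * G r := by
  have step1 : ∀ i j : ℕ, φ i * ψ j * G (i+j)
      = ∑ r ∈ range S, (if i + j = r then φ i * ψ j * G (i+j) else 0) := by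
    intro i j
    rw [Finset.sum_ite_eq (range S) (i+j) (fun _ => φ i * ψ j * G (i+j))]
    by_cases h : i + j ∈ range S
    · rw [if_pos h]
    · rw [if_neg h, hG (i+j) (by simpa using h), mul_zero]
  calc ∑ i ∈ range A, ∑ j ∈ range B, φ i * ψ j * G (i+j)
      = ∑ i ∈ range A, ∑ j ∈ range B, ∑ r ∈ range S,
          (if i + j = r then φ i * ψ j * G (i+j) else 0) := by
        exact Finset.sum_congr rfl fun i _ => Finset.sum_congr rfl fun j _ => step1 i j
    _ = ∑ i ∈ range A, ∑ r ∈ range S, ∑ j ∈ range B,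
          (if i + j = r then φ i * ψ j * G (i+j) else 0) := by
        exact Finset.sum_congr rfl fun i _ => Finset.sum_comm
    _ = ∑ r ∈ range S, ∑ i ∈ range A, ∑ j ∈ range B,
          (if i + j = r then φ i * ψ j * G (i+j) else 0) := Finset.sum_comm
    _ = ∑ r ∈ range S, ∑ i ∈ range A, (if i ≤ r then φ i * ψ (r-i) * G r else 0) := by
        refine Finset.sum_congr rfl fun r hr => Finset.sum_congr rfl fun i _ => ?_
        by_cases hi : i ≤ r
        · have hiff : ∀ j : ℕ, (i + j = r) ↔ (j = r - i) := by intro j; omega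
          have h5 : ∀ j ∈ range B, (if i + j = r then φ i * ψ j * G (i+j) else 0)
              = (if j = r - i then φ i * ψ j * G (i+j) else 0) := by
            intro j _
            exact if_congr (hiff j) rfl rfl
          rw [Finset.sum_congr rfl h5,
            Finset.sum_ite_eq' (range B) (r-i) (fun j => φ i * ψ j * G (i+j))]
          rw [if_pos (mem_range.2 (lt_of_le_of_lt (Nat.sub_le r i)
            (lt_of_lt_of_le (mem_range.1 hr) hSB))), if_pos hi, Nat.add_sub_cancel' hi]
        · rw [if_neg hi]
          refine Finset.sum_eq_zero fun j _ => if_neg (by omega)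
    _ = ∑ r ∈ range S, (∑ q ∈ range (r+1), φ q * ψ (r-q)) * G r := by
        refine Finset.sum_congr rfl fun r hr => ?_
        have hsub : range (r+1) ⊆ range A :=
          Finset.range_subset_range.2 (Nat.succ_le_of_lt (lt_of_lt_of_le (mem_range.1 hr) hSA))
        rw [← Finset.sum_subset hsub (fun x _ hx => if_neg (by simp at hx ⊢; omega))]
        rw [Finset.sum_congr rfl (fun i hi => if_pos (Nat.lt_succ_iff.1 (mem_range.1 hi))),
          Finset.sum_mul]
section ModuleLemmas
open Finset

variable {V : Type*} [AddCommGroup V] [Module ℂ V] {W : Type*} [AddCommGroup W] [Module ℂ W]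
variable {A : VertexAlg V} {σ₁ σ₂ σ : VAAut A} {T : ℕ}
variable {M : RightTwistedModule W A σ T}

private lemma natCast_ne_negone (i : ℕ) : ((i:ℕ):ℂ) ≠ -1 := by
  intro h
  have : (i:ℤ) = -1 := by exact_mod_cast h
  omega

private lemma eig_sigma (hσ : ∀ v : V, σ.g (σ₁.g (σ₂.g v)) = v)
    {j₁ j₂ : ℤ} {u : V} (h1 : eig σ₁ T j₁ u) (h2 : eig σ₂ T j₂ u) :
    eig σ T (-(j₁+j₂)) u := by
  classical
  set c₁ := Complex.exp (2 * (Real.pi : ℂ) * Complex.I * (j₁ : ℂ) / (T : ℂ)) with hc₁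
  set c₂ := Complex.exp (2 * (Real.pi : ℂ) * Complex.I * (j₂ : ℂ) / (T : ℂ)) with hc₂
  have h3 : σ₁.g (σ₂.g u) = (c₁ * c₂) • u := by
    rw [h2, map_smul, h1, smul_smul, mul_comm]
  have h4 := hσ u
  rw [h3, map_smul] at h4
  have hc0 : c₁ * c₂ ≠ 0 := mul_ne_zero (Complex.exp_ne_zero _) (Complex.exp_ne_zero _)
  have h5 : σ.g u = (c₁ * c₂)⁻¹ • u := by
    rw [eq_inv_smul_iff₀ hc0]
    exact h4
  have h6 : (c₁ * c₂)⁻¹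
      = Complex.exp (2 * (Real.pi : ℂ) * Complex.I * ((-(j₁+j₂) : ℤ) : ℂ) / (T : ℂ)) := by
    rw [hc₁, hc₂, ← Complex.exp_add, ← Complex.exp_neg]
    congr 1
    push_cast
    ring
  rw [eig, h5, h6]

private lemma jac_supp {j : ℤ} {u : V} (hju : eig σ T j u) (b : ℤ)
    (hnd : ¬ ((T:ℤ) ∣ b + j)) (w : W) : M.Y u ((b:ℂ)/(T:ℂ)) w = 0 := by
  have hj := M.jacobi j u hju A.one w (-1) b 0
  rw [if_neg hnd] at hj
  rw [finsum_eq_single _ 0 ?h0] at hj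
  case h0 =>
    intro i hi
    have t1 : M.Y A.one (((0:ℤ):ℂ)/(T:ℂ) + (i:ℂ))
        (M.Y u (((-1:ℤ):ℂ) + (b:ℂ)/(T:ℂ) - (i:ℂ)) w) = 0 := by
      rw [M.vacuum_eq, if_neg]
      simpa using natCast_ne_negone i
    have t2 : M.Y A.one (((-1:ℤ):ℂ) + ((0:ℤ):ℂ)/(T:ℂ) - (i:ℂ)) w = 0 := by
      rw [M.vacuum_eq, if_neg]
      intro h
      apply hi
      have : ((i:ℕ):ℂ) = 0 := by
        have h' : ((-1:ℤ):ℂ) + ((0:ℤ):ℂ)/(T:ℂ) - (i:ℂ) = -1 - (i:ℂ) := by push_cast; ring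
        rw [h'] at h
        linear_combination -h
      exact_mod_cast this
    rw [t1, t2, map_zero, smul_zero, sub_zero, smul_zero]
  · -- evaluate the 0 summand
    have e1 : M.Y A.one (((0:ℤ):ℂ)/(T:ℂ) + ((0:ℕ):ℂ))
        (M.Y u (((-1:ℤ):ℂ) + (b:ℂ)/(T:ℂ) - ((0:ℕ):ℂ)) w) = 0 := by
      rw [M.vacuum_eq, if_neg]
      intro h
      have : (0:ℂ) = -1 := by
        have h' : ((0:ℤ):ℂ)/(T:ℂ) + ((0:ℕ):ℂ) = 0 := by push_cast; ring
        rw [h'] at h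
        exact h
      norm_num at this
    have e2 : M.Y A.one (((-1:ℤ):ℂ) + ((0:ℤ):ℂ)/(T:ℂ) - ((0:ℕ):ℂ)) w = w := by
      rw [M.vacuum_eq, if_pos]
      push_cast
      ring
    rw [e1, e2] at hj
    have e3 : ((-1:ℂ)^(0:ℕ) * cbinom ((-1:ℤ):ℂ) 0) = 1 := by
      simp [cbinom_zero']
    rw [e3, one_smul] at hj
    have e4 : ((-1:ℂ)^(-1:ℤ)) = -1 := by
      rw [zpow_neg_one]
      norm_num
    rw [e4] at hj
    have e5 : (b:ℂ)/(T:ℂ) + ((0:ℕ):ℂ) = (b:ℂ)/(T:ℂ) := by push_cast; ring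
    rw [e5] at hj
    have := hj
    rw [zero_sub, neg_smul, neg_neg, one_smul] at this
    exact this

private lemma Ysupp (hT : 0 < T) (hσ : ∀ v : V, σ.g (σ₁.g (σ₂.g v)) = v)
    {j₁ j₂ : ℤ} {u : V} (h1 : eig σ₁ T j₁ u) (h2 : eig σ₂ T j₂ u) :
    ∀ nn : ℂ, (∀ m : ℤ, nn ≠ ((j₁ + j₂ : ℤ):ℂ)/(T:ℂ) + (m:ℂ)) → ∀ w : W,
      M.Y u nn w = 0 := by
  intro nn hnn w
  have hTC : (T:ℂ) ≠ 0 := Nat.cast_ne_zero.2 hT.ne'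
  by_cases hb : ∃ b:ℤ, nn = (b:ℂ)/(T:ℂ)
  · obtain ⟨b, rfl⟩ := hb
    by_cases hd : (T:ℤ) ∣ b + (-(j₁+j₂))
    · obtain ⟨m, hm⟩ := hd
      exfalso
      apply hnn m
      have hb' : b = j₁ + j₂ + T * m := by omega
      rw [hb']
      push_cast
      field_simp
    · exact jac_supp (eig_sigma hσ h1 h2) b hd w
  · have hlat : ∀ m:ℤ, nn ≠ (m:ℂ)/(T:ℂ) := by
      intro m hm
      exact hb ⟨m, hm⟩
    rw [M.latt u nn hlat]
    rfl

private lemma lowvanish (hT : 0 < T) (v : V) (w : W) (c : ℂ) :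
    ∃ M₀:ℕ, ∀ i:ℕ, M₀ ≤ i → M.Y v (c - (i:ℂ)) w = 0 := by
  have hTC : (T:ℂ) ≠ 0 := Nat.cast_ne_zero.2 hT.ne'
  by_cases hb : ∃ b:ℤ, c = (b:ℂ)/(T:ℂ)
  · obtain ⟨b, rfl⟩ := hb
    obtain ⟨N, hN⟩ := M.trunc v w
    refine ⟨(b - N).toNat, fun i hi => ?_⟩
    have harg : (b:ℂ)/(T:ℂ) - (i:ℂ) = ((b - T*i : ℤ):ℂ)/(T:ℂ) := by
      push_cast
      field_simp
    rw [harg]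
    apply hN
    have hg1 : (b - N : ℤ) ≤ ((b-N).toNat : ℤ) := Int.self_le_toNat _
    have hg2 : ((b-N).toNat : ℤ) ≤ (i : ℤ) := by exact_mod_cast hi
    have hg3 : (i:ℤ) ≤ (T:ℤ) * i := le_mul_of_one_le_left (by positivity) (by exact_mod_cast hT)
    omega
  · refine ⟨0, fun i _ => ?_⟩
    have hlat : ∀ m:ℤ, c - (i:ℂ) ≠ (m:ℂ)/(T:ℂ) := by
      intro m hm
      refine hb ⟨m + T*i, ?_⟩
      push_cast
      rw [add_div]
      have hti : (T:ℂ)*(i:ℂ)/(T:ℂ) = (i:ℂ) := by field_simp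
      rw [hti]
      linear_combination hm
    rw [M.latt v _ hlat]
    rfl

private lemma Ycommutator {j : ℤ} {u : V} (hju : eig σ T j u) (v' : V) (w : W) (b c : ℤ)
    (hdvd : (T:ℤ) ∣ b + j) :
    M.Y v' ((c:ℂ)/(T:ℂ)) (M.Y u ((b:ℂ)/(T:ℂ)) w)
      = M.Y u ((b:ℂ)/(T:ℂ)) (M.Y v' ((c:ℂ)/(T:ℂ)) w)
        + ∑ᶠ l:ℕ, cbinom ((b:ℂ)/(T:ℂ)) l •
            M.Y (A.Y u (l:ℤ) v') ((b:ℂ)/(T:ℂ) + (c:ℂ)/(T:ℂ) - (l:ℂ)) w := by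
  have hj := M.jacobi j u hju v' w 0 b c
  rw [if_pos hdvd] at hj
  rw [finsum_eq_single _ 0 ?h0] at hj
  case h0 =>
    intro i hi
    obtain ⟨i', rfl⟩ := Nat.exists_eq_succ_of_ne_zero hi
    have : cbinom ((0:ℤ):ℂ) (i'+1) = 0 := by
      rw [Int.cast_zero]
      exact cbinom_zero_left i'
    rw [this, mul_zero, zero_smul]
  · have simpc : ∀ x : ℂ, ((0:ℤ):ℂ) + x - ((0:ℕ):ℂ) = x := by intro x; push_cast; ring
    rw [simpc, simpc] at hj
    have e3 : ((-1:ℂ)^(0:ℕ) * cbinom ((0:ℤ):ℂ) 0) = 1 := by simp [cbinom_zero']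
    have e4 : ((-1:ℂ)^(0:ℤ)) = 1 := by norm_num
    rw [e3, e4, one_smul, one_smul] at hj
    have e5 : ∀ x : ℂ, x + ((0:ℕ):ℂ) = x := by intro x; push_cast; ring
    rw [e5, e5] at hj
    rw [sub_eq_iff_eq_add'] at hj
    rw [hj]
    congr 1
    apply finsum_congr
    intro l
    norm_num
end ModuleLemmas
section DCondMono
open Finset

private lemma mulXZ_succ (z β : ℂ) (f : ℂ → ℂ) (n : ℂ) (M₀ : ℕ)
    (hf : ∀ i:ℕ, M₀ ≤ i → f ((n+1) + β - (i:ℂ)) = 0) :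
    mulXZ z (β+1) f n = mulXZ z β f (n+1) + (-z) * mulXZ z β f n := by
  have hL : mulXZ z (β+1) f n
      = ∑ i ∈ range (M₀+1), cbinom (β+1) i * (-z)^i * f (n + (β+1) - (i:ℂ)) := by
    rw [mulXZ]
    apply finsum_eq_sum_range
    intro i hi
    have e : n + (β+1) - (i:ℂ) = (n+1) + β - (i:ℂ) := by ring
    rw [e, hf i (le_trans (Nat.le_succ M₀) hi), mul_zero]
  have hR1 : mulXZ z β f (n+1)
      = ∑ i ∈ range (M₀+1), cbinom β i * (-z)^i * f ((n+1) + β - (i:ℂ)) := by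
    rw [mulXZ]
    apply finsum_eq_sum_range
    intro i hi
    rw [hf i (le_trans (Nat.le_succ M₀) hi), mul_zero]
  have hR2 : mulXZ z β f n
      = ∑ i ∈ range M₀, cbinom β i * (-z)^i * f (n + β - (i:ℂ)) := by
    rw [mulXZ]
    apply finsum_eq_sum_range
    intro i hi
    have e : n + β - (i:ℂ) = (n+1) + β - ((i+1:ℕ):ℂ) := by push_cast; ring
    rw [e, hf (i+1) (le_trans hi (Nat.le_succ i)), mul_zero]
  rw [hL, hR1, hR2]
  rw [Finset.sum_range_succ' (fun i => cbinom (β+1) i * (-z)^i * f (n + (β+1) - (i:ℂ))) M₀,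
    Finset.sum_range_succ' (fun i => cbinom β i * (-z)^i * f ((n+1) + β - (i:ℂ))) M₀]
  rw [Finset.mul_sum, add_comm (∑ i ∈ range M₀, cbinom β (i+1:ℕ) * (-z)^(i+1:ℕ) *
    f ((n+1) + β - ((i+1:ℕ):ℂ)))]
  rw [add_assoc, add_comm (cbinom β 0 * (-z)^(0:ℕ) * f ((n+1) + β - ((0:ℕ):ℂ))), ← add_assoc,
    ← Finset.sum_add_distrib]
  congr 1
  · apply Finset.sum_congr rfl
    intro i _
    have e1 : n + β + 1 - ((i+1:ℕ):ℂ) = n + β - (i:ℂ) := by push_cast; ring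
    have e2 : (n+1) + β - ((i+1:ℕ):ℂ) = n + β - (i:ℂ) := by push_cast; ring
    rw [e1, e2, cbinom_pascal β i]
    ring
  · have e1 : n + β + 1 - ((0:ℕ):ℂ) = n + 1 + β - ((0:ℕ):ℂ) := by push_cast; ring
    rw [e1, cbinom_zero', cbinom_zero']

variable {V : Type*} [AddCommGroup V] [Module ℂ V] {W : Type*} [AddCommGroup W] [Module ℂ W]
variable {A : VertexAlg V} {σ₁ σ₂ σ : VAAut A} {T : ℕ}
variable {M : RightTwistedModule W A σ T}

private lemma DCond_succ {z : ℂ} {j₁ j₂ : ℤ} {u : V} {α : W → ℂ} {k : ℕ}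
    (hT : 0 < T) (hα0 : α 0 = 0)
    (h : DCond T z j₁ j₂ M.Y u α k) : DCond T z j₁ j₂ M.Y u α (k+1) := by
  have hcast : ((k+1:ℕ):ℂ) + (j₁:ℂ)/(T:ℂ) = (((k:ℕ):ℂ) + (j₁:ℂ)/(T:ℂ)) + 1 := by
    push_cast; ring
  have key : ∀ (n₀ : ℂ) (w : W),
      mulXZ z ((((k:ℕ):ℂ) + (j₁:ℂ)/(T:ℂ))+1) (Ydual M.Y u α w) n₀
        = mulXZ z (((k:ℕ):ℂ)+(j₁:ℂ)/(T:ℂ)) (Ydual M.Y u α w) (n₀+1)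
          + (-z) * mulXZ z (((k:ℕ):ℂ)+(j₁:ℂ)/(T:ℂ)) (Ydual M.Y u α w) n₀ := by
    intro n₀ w
    obtain ⟨M₀, hM₀⟩ := lowvanish (M := M) hT u w ((n₀+1) + (((k:ℕ):ℂ)+(j₁:ℂ)/(T:ℂ)))
    refine mulXZ_succ z _ _ n₀ M₀ (fun i hi => ?_)
    have e : (n₀+1) + (((k:ℕ):ℂ)+(j₁:ℂ)/(T:ℂ)) - (i:ℂ)
        = ((n₀+1) + (((k:ℕ):ℂ)+(j₁:ℂ)/(T:ℂ))) - (i:ℂ) := by ring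
    show α (M.Y u _ w) = 0
    rw [e, hM₀ i hi, hα0]
  constructor
  · intro n hn w
    rw [hcast, key]
    have hn' : ∀ m : ℤ, n + 1 ≠ (m:ℂ) := by
      intro m he
      exact hn (m-1) (by push_cast; linear_combination he)
    have e : (n + (j₂:ℂ)/(T:ℂ)) + 1 = (n+1) + (j₂:ℂ)/(T:ℂ) := by ring
    rw [e, h.1 (n+1) hn' w, h.1 n hn w]
    ring
  · obtain ⟨N, hN⟩ := h.2
    refine ⟨N, fun m hm w => ?_⟩
    rw [hcast, key]
    have e : ((m:ℂ) + (j₂:ℂ)/(T:ℂ)) + 1 = ((m+1:ℤ):ℂ) + (j₂:ℂ)/(T:ℂ) := by push_cast; ring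
    rw [e, hN (m+1) (by omega) w, hN m hm w]
    ring

private lemma DCond_mono {z : ℂ} {j₁ j₂ : ℤ} {u : V} {α : W → ℂ} {k k' : ℕ}
    (hT : 0 < T) (hα0 : α 0 = 0) (hkk : k ≤ k')
    (h : DCond T z j₁ j₂ M.Y u α k) : DCond T z j₁ j₂ M.Y u α k' := by
  induction k', hkk using Nat.le_induction with
  | base => exact h
  | succ n hn ih => exact DCond_succ hT hα0 ih

end DCondMono
section MainLemma
open Finset

variable {V : Type*} [AddCommGroup V] [Module ℂ V] {W : Type*} [AddCommGroup W] [Module ℂ W]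
variable {A : VertexAlg V} {σ₁ σ₂ σ : VAAut A} {T : ℕ}
variable {M : RightTwistedModule W A σ T}

private lemma eig_prod {σ' : VAAut A} {a b : ℤ} {x y : V}
    (hx : eig σ' T a x) (hy : eig σ' T b y) (l : ℤ) : eig σ' T (a+b) (A.Y x l y) := by
  unfold eig at *
  rw [σ'.map_Y, hx, hy, map_smul, map_smul, Pi.smul_apply, LinearMap.smul_apply, smul_smul,
    ← Complex.exp_add]
  congr 2
  push_cast
  ring

private lemma main_lemma
    (hT : 0 < T) (hσ : ∀ v : V, σ.g (σ₁.g (σ₂.g v)) = v)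
    {z : ℂ} {α : W → ℂ} (hα : α ∈ Dspace σ₁ σ₂ T M.Y z)
    {j₁ j₂ r₁ r₂ : ℤ} {u v : V}
    (hu₁ : eig σ₁ T j₁ u) (hu₂ : eig σ₂ T j₂ u)
    (hv₁ : eig σ₁ T r₁ v) (hv₂ : eig σ₂ T r₂ v)
    (n : ℤ) :
    ∃ k : ℕ, ∀ n₂ : ℂ,
      DCond T z j₁ j₂ M.Y u
        (fun w => mulXZ z ((n:ℂ) + (r₁:ℂ)/(T:ℂ)) (Ydual M.Y v α w) n₂) k := by
  classical
  have hTC : (T:ℂ) ≠ 0 := Nat.cast_ne_zero.2 hT.ne'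
  have hlin := hα.1
  have hα0 : α 0 = 0 := hlin.map_zero
  -- truncation of products u_l v
  obtain ⟨NL, hNL⟩ := A.trunc u v
  set L : ℕ := NL.toNat with hLdef
  have hL : ∀ l:ℕ, L ≤ l → A.Y u (l:ℤ) v = 0 := by
    intro l hl
    apply hNL
    exact le_trans (Int.self_le_toNat NL) (by exact_mod_cast hl)
  -- DCond for u
  obtain ⟨ku, hku⟩ := hα.2 j₁ j₂ u hu₁ hu₂
  -- DCond for products
  have hall : ∀ l:ℕ, ∃ k0:ℕ, DCond T z (j₁+r₁) (j₂+r₂) M.Y (A.Y u (l:ℤ) v) α k0 :=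
    fun l => hα.2 (j₁+r₁) (j₂+r₂) (A.Y u (l:ℤ) v) (eig_prod hu₁ hv₁ l) (eig_prod hu₂ hv₂ l)
  choose kl hkl using hall
  -- the uniform k
  set k : ℕ := max ku ((Finset.range L).sup fun l => kl l + l + n.natAbs) with hkdef
  have hku' : DCond T z j₁ j₂ M.Y u α k := DCond_mono hT hα0 (le_max_left _ _) hku
  have hkbig : ∀ l:ℕ, l < L → ∀ t:ℕ, t ≤ l → (kl l : ℤ) ≤ (k:ℤ) + n - t ∧ 0 ≤ (k:ℤ) + n - t := by
    intro l hl t ht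
    have h1 : kl l + l + n.natAbs ≤ k := by
      rw [hkdef]
      exact le_trans
        (Finset.le_sup (f := fun l => kl l + l + n.natAbs) (Finset.mem_range.2 hl))
        (le_max_right _ _)
    have h2 : (n.natAbs : ℤ) + n ≥ 0 := by omega
    omega
  -- DCond for products at the adjusted exponents
  have hex : ∀ l t : ℕ, ∃ N:ℤ, l < L → t ≤ l → ∀ m:ℤ, N ≤ m → ∀ w:W,
      mulXZ z (((((k:ℤ)+n-(t:ℤ)).toNat : ℕ) : ℂ) + ((j₁+r₁:ℤ):ℂ)/(T:ℂ))
        (Ydual M.Y (A.Y u (l:ℤ) v) α w) ((m:ℂ) + ((j₂+r₂:ℤ):ℂ)/(T:ℂ)) = 0 := by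
    intro l t
    by_cases hlt : l < L ∧ t ≤ l
    · have hmono : kl l ≤ ((k:ℤ)+n-(t:ℤ)).toNat := by
        have := hkbig l hlt.1 t hlt.2
        omega
      obtain ⟨N, hN⟩ := (DCond_mono hT hα0 hmono (hkl l)).2
      exact ⟨N, fun _ _ => hN⟩
    · exact ⟨0, fun h1 h2 => absurd ⟨h1, h2⟩ hlt⟩
  choose N₂ hN₂ using hex
  refine ⟨k, fun n₂ => ?_⟩
  set ν : ℂ := (n:ℂ) + (r₁:ℂ)/(T:ℂ) with hνdef
  set κ : ℂ := ((k:ℕ):ℂ) + (j₁:ℂ)/(T:ℂ) with hκdef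
  set β : W → ℂ := fun w => mulXZ z ν (Ydual M.Y v α w) n₂ with hβdef
  have hβ0 : β 0 = 0 := by
    rw [hβdef]
    simp only [mulXZ, Ydual, map_zero, hα0, mul_zero]
    exact finsum_zero
  constructor
  · -- off-integer vanishing in the x₁ variable
    intro nn hnn w
    show mulXZ z κ (Ydual M.Y u β w) (nn + (j₂:ℂ)/(T:ℂ)) = 0
    rw [mulXZ]
    apply finsum_eq_zero_of_forall_eq_zero
    intro i
    have hzero : M.Y u (nn + (j₂:ℂ)/(T:ℂ) + κ - (i:ℂ)) w = 0 := by
      apply Ysupp hT hσ hu₁ hu₂ _ _ w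
      intro m he
      apply hnn ((m + i - k : ℤ))
      rw [hκdef] at he
      push_cast at he ⊢
      linear_combination he
    show cbinom κ i * (-z)^i * β (M.Y u (nn + (j₂:ℂ)/(T:ℂ) + κ - (i:ℂ)) w) = 0
    rw [hzero, hβ0, mul_zero]
  · -- truncation
    by_cases hp : ∃ p:ℤ, n₂ = (r₂:ℂ)/(T:ℂ) + p
    case neg =>
      refine ⟨0, fun m _ w => ?_⟩
      have hβall : ∀ w'' : W, β w'' = 0 := by
        intro w''
        rw [hβdef]
        show mulXZ z ν (Ydual M.Y v α w'') n₂ = 0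
        rw [mulXZ]
        apply finsum_eq_zero_of_forall_eq_zero
        intro i'
        have hzero : M.Y v (n₂ + ν - (i':ℂ)) w'' = 0 := by
          apply Ysupp hT hσ hv₁ hv₂ _ _ w''
          intro q he
          apply hp
          refine ⟨q - n + i', ?_⟩
          rw [hνdef] at he
          push_cast at he ⊢
          linear_combination he
        show cbinom ν i' * (-z)^i' * α (M.Y v (n₂ + ν - (i':ℂ)) w'') = 0
        rw [hzero, hα0, mul_zero]
      show mulXZ z κ (Ydual M.Y u β w) ((m:ℂ) + (j₂:ℂ)/(T:ℂ)) = 0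
      rw [mulXZ]
      apply finsum_eq_zero_of_forall_eq_zero
      intro i
      show cbinom κ i * (-z)^i * β (M.Y u _ w) = 0
      rw [hβall, mul_zero]
    case pos =>
      obtain ⟨p, hn₂⟩ := hp
      obtain ⟨Nu, hNu⟩ := hku'.2
      set N : ℤ := max Nu
        (((Finset.range L ×ˢ Finset.range L).sup
            fun lt => (N₂ lt.1 lt.2 + (lt.1:ℤ) - p).toNat : ℕ) : ℤ) with hNdef
      refine ⟨N, fun m hm w => ?_⟩
      -- integer bounds
      have hmNu : Nu ≤ m := le_trans (le_max_left _ _) hm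
      have hmN₂ : ∀ l t : ℕ, l < L → t ≤ l → N₂ l t ≤ p + m - l := by
        intro l t hl ht
        have hmem : (l, t) ∈ Finset.range L ×ˢ Finset.range L :=
          Finset.mem_product.2 ⟨Finset.mem_range.2 hl, Finset.mem_range.2 (lt_of_le_of_lt ht hl)⟩
        have h1 : ((N₂ l t + (l:ℤ) - p).toNat : ℕ)
            ≤ (Finset.range L ×ˢ Finset.range L).sup
                (fun lt => (N₂ lt.1 lt.2 + (lt.1:ℤ) - p).toNat) :=
          Finset.le_sup (f := fun lt => (N₂ lt.1 lt.2 + (lt.1:ℤ) - p).toNat) hmem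
        have h1' : (((N₂ l t + (l:ℤ) - p).toNat : ℕ) : ℤ)
            ≤ (((Finset.range L ×ˢ Finset.range L).sup
                (fun lt => (N₂ lt.1 lt.2 + (lt.1:ℤ) - p).toNat) : ℕ) : ℤ) := by exact_mod_cast h1
        have h2 : (((Finset.range L ×ˢ Finset.range L).sup
            (fun lt => (N₂ lt.1 lt.2 + (lt.1:ℤ) - p).toNat) : ℕ) : ℤ) ≤ N := by
          rw [hNdef]; exact le_max_right _ _
        have h3 := Int.self_le_toNat (N₂ l t + (l:ℤ) - p)
        omega
      -- truncation bounds for the various series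
      obtain ⟨M₁, hM₁⟩ := lowvanish (M := M) hT u w (((m:ℂ) + (j₂:ℂ)/(T:ℂ)) + κ)
      set X : ℂ := (m:ℂ) + (j₂:ℂ)/(T:ℂ) with hXdef
      have hM₂ex : ∀ i:ℕ, ∃ M₂:ℕ, ∀ i':ℕ, M₂ ≤ i' →
          M.Y v (n₂ + ν - (i':ℂ)) (M.Y u (X + κ - (i:ℂ)) w) = 0 :=
        fun i => lowvanish hT v _ (n₂ + ν)
      choose M₂ hM₂ using hM₂ex
      obtain ⟨M₂'', hM₂''⟩ := lowvanish (M := M) hT v w (n₂ + ν)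
      have hSex : ∀ l:ℕ, ∃ S:ℕ, ∀ s:ℕ, S ≤ s →
          M.Y (A.Y u (l:ℤ) v) (n₂ + ν + X + κ - (l:ℂ) - (s:ℂ)) w = 0 :=
        fun l => lowvanish hT _ w (n₂ + ν + X + κ - (l:ℂ))
      choose Sf hSf using hSex
      set SS : ℕ := (Finset.range L).sup Sf with hSSdef
      set J : ℕ := max (max ((Finset.range M₁).sup M₂) M₂'') SS with hJdef
      have hJM₂ : ∀ i:ℕ, i < M₁ → M₂ i ≤ J := fun i hi =>
        le_trans (Finset.le_sup (Finset.mem_range.2 hi))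
          (le_trans (le_max_left _ _) (le_max_left _ _))
      have hJM₂'' : M₂'' ≤ J := le_trans (le_max_right _ _) (le_max_left _ _)
      have hJSS : SS ≤ J := le_max_right _ _
      have hM₁'ex : ∀ i':ℕ, ∃ M₁':ℕ, ∀ i:ℕ, M₁' ≤ i →
          M.Y u (X + κ - (i:ℂ)) (M.Y v (n₂ + ν - (i':ℂ)) w) = 0 :=
        fun i' => lowvanish hT u _ (X + κ)
      choose M₁' hM₁' using hM₁'ex
      set K : ℕ := max (max M₁ ((Finset.range J).sup M₁')) (SS + L) with hKdef
      have hKM₁ : M₁ ≤ K := le_trans (le_max_left _ _) (le_max_left _ _)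
      have hKM₁' : ∀ i':ℕ, i' < J → M₁' i' ≤ K := fun i' hi' =>
        le_trans (le_trans (Finset.le_sup (Finset.mem_range.2 hi')) (le_max_right _ _))
          (le_max_left _ _)
      have hKSL : SS + L ≤ K := le_max_right _ _
      -- step 1 : convert the outer finsum to a finite sum
      have hstep1 : mulXZ z κ (Ydual M.Y u β w) X
          = ∑ i ∈ range K, cbinom κ i * (-z)^i * β (M.Y u (X + κ - (i:ℂ)) w) := by
        rw [mulXZ]
        apply finsum_eq_sum_range
        intro i hi
        show cbinom κ i * (-z)^i * β (M.Y u (X + κ - (i:ℂ)) w) = 0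
        rw [hM₁ i (le_trans hKM₁ hi), hβ0, mul_zero]
      -- step 2 : convert each inner finsum to a finite sum
      have hstep2 : ∀ i:ℕ, β (M.Y u (X + κ - (i:ℂ)) w)
          = ∑ i' ∈ range J, cbinom ν i' * (-z)^i' *
              α (M.Y v (n₂ + ν - (i':ℂ)) (M.Y u (X + κ - (i:ℂ)) w)) := by
        intro i
        show mulXZ z ν (Ydual M.Y v α (M.Y u (X + κ - (i:ℂ)) w)) n₂ = _
        rw [mulXZ]
        apply finsum_eq_sum_range
        intro i' hi'
        show cbinom ν i' * (-z)^i' *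
            α (M.Y v (n₂ + ν - (i':ℂ)) (M.Y u (X + κ - (i:ℂ)) w)) = 0
        by_cases hiM : i < M₁
        · rw [hM₂ i i' (le_trans (hJM₂ i hiM) hi'), hα0, mul_zero]
        · rw [hM₁ i (not_lt.1 hiM), map_zero, hα0, mul_zero]
      -- commutator
      have hcomm : ∀ i i' : ℕ,
          α (M.Y v (n₂ + ν - (i':ℂ)) (M.Y u (X + κ - (i:ℂ)) w))
            = α (M.Y u (X + κ - (i:ℂ)) (M.Y v (n₂ + ν - (i':ℂ)) w))
              + ∑ l ∈ range L, cbinom (X + κ - (i:ℂ)) l *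
                  α (M.Y (A.Y u (l:ℤ) v)
                      ((X + κ - (i:ℂ)) + (n₂ + ν - (i':ℂ)) - (l:ℂ)) w) := by
        intro i i'
        have eQ : ((j₁ + j₂ + (T:ℤ)*(m + k - i) : ℤ):ℂ)/(T:ℂ) = X + κ - (i:ℂ) := by
          rw [hXdef, hκdef]
          push_cast
          field_simp
          ring
        have eP : ((r₁ + r₂ + (T:ℤ)*(p + n - i') : ℤ):ℂ)/(T:ℂ) = n₂ + ν - (i':ℂ) := by
          rw [hνdef, hn₂]
          push_cast
          field_simp
          ring
        have hdvd : (T:ℤ) ∣ (j₁ + j₂ + (T:ℤ)*(m + k - i)) + (-(j₁+j₂)) :=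
          ⟨m + k - i, by ring⟩
        have hYc := Ycommutator (M := M) (eig_sigma hσ hu₁ hu₂) v w
          (j₁ + j₂ + (T:ℤ)*(m + k - i)) (r₁ + r₂ + (T:ℤ)*(p + n - i')) hdvd
        rw [eQ, eP] at hYc
        have hfin : (∑ᶠ l:ℕ, cbinom (X + κ - (i:ℂ)) l •
              M.Y (A.Y u (l:ℤ) v) ((X + κ - (i:ℂ)) + (n₂ + ν - (i':ℂ)) - (l:ℂ)) w)
            = ∑ l ∈ range L, cbinom (X + κ - (i:ℂ)) l •
              M.Y (A.Y u (l:ℤ) v) ((X + κ - (i:ℂ)) + (n₂ + ν - (i':ℂ)) - (l:ℂ)) w := by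
          apply finsum_eq_sum_range
          intro l hl
          rw [hL l hl, map_zero]
          simp
        rw [hfin] at hYc
        rw [hYc, hlin.map_add]
        congr 1
        have hms := map_sum (IsLinearMap.mk' α hlin)
          (fun l => cbinom (X + κ - (i:ℂ)) l •
            M.Y (A.Y u (l:ℤ) v) ((X + κ - (i:ℂ)) + (n₂ + ν - (i':ℂ)) - (l:ℂ)) w) (range L)
        simp only [IsLinearMap.mk'_apply] at hms
        rw [hms]
        refine Finset.sum_congr rfl fun l _ => ?_
        rw [hlin.map_smul, smul_eq_mul]
      -- assemble the double sum and split via the commutator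
      rw [hstep1, Finset.sum_congr rfl fun i _ => by rw [hstep2 i, Finset.mul_sum]]
      have hsplit : ∀ i i' : ℕ,
          cbinom κ i * (-z)^i * (cbinom ν i' * (-z)^i' *
              α (M.Y v (n₂ + ν - (i':ℂ)) (M.Y u (X + κ - (i:ℂ)) w)))
          = (cbinom κ i * (-z)^i) * ((cbinom ν i' * (-z)^i') *
                α (M.Y u (X + κ - (i:ℂ)) (M.Y v (n₂ + ν - (i':ℂ)) w)))
            + ∑ l ∈ range L, (cbinom κ i * (-z)^i) * ((cbinom ν i' * (-z)^i') *
                (cbinom (X + κ - (i:ℂ)) l *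
                  α (M.Y (A.Y u (l:ℤ) v)
                      ((X + κ - (i:ℂ)) + (n₂ + ν - (i':ℂ)) - (l:ℂ)) w))) := by
        intro i i'
        rw [hcomm i i', mul_add, mul_add]
        congr 1
        rw [Finset.mul_sum, Finset.mul_sum]
      rw [Finset.sum_congr rfl fun i _ => Finset.sum_congr rfl fun i' _ => hsplit i i']
      rw [Finset.sum_congr rfl fun i (_ : i ∈ range K) => Finset.sum_add_distrib,
        Finset.sum_add_distrib]
      -- first piece vanishes by DCond for u
      have hP1 : ∑ i ∈ range K, ∑ i' ∈ range J,
          (cbinom κ i * (-z)^i) * ((cbinom ν i' * (-z)^i') *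
            α (M.Y u (X + κ - (i:ℂ)) (M.Y v (n₂ + ν - (i':ℂ)) w))) = 0 := by
        rw [Finset.sum_comm]
        apply Finset.sum_eq_zero
        intro i' hi'
        have hinner : ∑ i ∈ range K, (cbinom κ i * (-z)^i) * ((cbinom ν i' * (-z)^i') *
              α (M.Y u (X + κ - (i:ℂ)) (M.Y v (n₂ + ν - (i':ℂ)) w)))
            = (cbinom ν i' * (-z)^i') * ∑ i ∈ range K, cbinom κ i * (-z)^i *
                α (M.Y u (X + κ - (i:ℂ)) (M.Y v (n₂ + ν - (i':ℂ)) w)) := by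
          rw [Finset.mul_sum]
          exact Finset.sum_congr rfl fun i _ => by ring
        rw [hinner]
        have hfull : ∑ i ∈ range K, cbinom κ i * (-z)^i *
              α (M.Y u (X + κ - (i:ℂ)) (M.Y v (n₂ + ν - (i':ℂ)) w))
            = mulXZ z κ (Ydual M.Y u α (M.Y v (n₂ + ν - (i':ℂ)) w)) X := by
          rw [mulXZ]
          refine (finsum_eq_sum_range ?_).symm
          intro i hi
          show cbinom κ i * (-z)^i *
              α (M.Y u (X + κ - (i:ℂ)) (M.Y v (n₂ + ν - (i':ℂ)) w)) = 0
          rw [hM₁' i' i (le_trans (hKM₁' i' (Finset.mem_range.1 hi')) hi), hα0, mul_zero]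
        rw [hfull, hXdef, hNu m hmNu, mul_zero]
      rw [hP1, zero_add]
      -- swap the correction sum
      rw [Finset.sum_congr rfl fun i (_ : i ∈ range K) => Finset.sum_comm
        (s := range J) (t := range L), Finset.sum_comm (s := range K) (t := range L)]
      -- second piece vanishes by DCond for the products
      apply Finset.sum_eq_zero
      intro l hlmem
      have hlL : l < L := Finset.mem_range.1 hlmem
      obtain ⟨d, hd⟩ := newton l (X + κ)
      have hSfSS : Sf l ≤ SS := Finset.le_sup hlmem
      -- rewrite the generic term using the Newton expansion
      have hterm : ∀ i i' : ℕ,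
          (cbinom κ i * (-z)^i) * ((cbinom ν i' * (-z)^i') *
            (cbinom (X + κ - (i:ℂ)) l *
              α (M.Y (A.Y u (l:ℤ) v)
                  ((X + κ - (i:ℂ)) + (n₂ + ν - (i':ℂ)) - (l:ℂ)) w)))
          = ∑ t ∈ range (l+1), d t *
              ((cbinom κ i * ((i.choose t : ℕ):ℂ) * (-z)^i) * ((cbinom ν i' * (-z)^i') *
                α (M.Y (A.Y u (l:ℤ) v)
                    (n₂ + ν + X + κ - (l:ℂ) - (i:ℂ) - (i':ℂ)) w))) := by
        intro i i'
        have earg : (X + κ - (i:ℂ)) + (n₂ + ν - (i':ℂ)) - (l:ℂ)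
            = n₂ + ν + X + κ - (l:ℂ) - (i:ℂ) - (i':ℂ) := by ring
        rw [earg, hd i, Finset.sum_mul, Finset.mul_sum, Finset.mul_sum]
        exact Finset.sum_congr rfl fun t _ => by ring
      rw [Finset.sum_congr rfl fun i (_ : i ∈ range K) => Finset.sum_congr rfl
        fun i' (_ : i' ∈ range J) => hterm i i']
      rw [Finset.sum_congr rfl fun i (_ : i ∈ range K) => Finset.sum_comm
        (s := range J) (t := range (l+1)), Finset.sum_comm (s := range K) (t := range (l+1))]
      apply Finset.sum_eq_zero
      intro t htmem
      have htl : t ≤ l := Nat.lt_succ_iff.1 (Finset.mem_range.1 htmem)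
      have htK : t ≤ K := le_trans (le_trans htl hlL.le) (le_trans (Nat.le_add_left L SS) hKSL)
      have hQ : ∑ i ∈ range K, ∑ i' ∈ range J,
          (cbinom κ i * ((i.choose t : ℕ):ℂ) * (-z)^i) * ((cbinom ν i' * (-z)^i') *
            α (M.Y (A.Y u (l:ℤ) v)
                (n₂ + ν + X + κ - (l:ℂ) - (i:ℂ) - (i':ℂ)) w)) = 0 := by
        rw [Finset.range_eq_Ico, ← Finset.sum_Ico_consecutive _ (Nat.zero_le t) htK,
          ← Finset.range_eq_Ico]
        have hfirst : ∑ i ∈ Finset.range t, ∑ i' ∈ range J,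
            (cbinom κ i * ((i.choose t : ℕ):ℂ) * (-z)^i) * ((cbinom ν i' * (-z)^i') *
              α (M.Y (A.Y u (l:ℤ) v)
                  (n₂ + ν + X + κ - (l:ℂ) - (i:ℂ) - (i':ℂ)) w)) = 0 := by
          apply Finset.sum_eq_zero
          intro i hi
          apply Finset.sum_eq_zero
          intro i' _
          rw [Nat.choose_eq_zero_of_lt (Finset.mem_range.1 hi)]
          push_cast
          ring
        rw [hfirst, zero_add, Finset.sum_Ico_eq_sum_range]
        have hre : ∀ j ∈ range (K - t), (∑ i' ∈ range J,
            (cbinom κ (t+j) * (((t+j).choose t : ℕ):ℂ) * (-z)^(t+j)) * ((cbinom ν i' * (-z)^i') *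
              α (M.Y (A.Y u (l:ℤ) v)
                  (n₂ + ν + X + κ - (l:ℂ) - ((t+j:ℕ):ℂ) - (i':ℂ)) w)))
            = (cbinom κ t * (-z)^t) * ∑ i' ∈ range J,
                (cbinom (κ - (t:ℂ)) j * (-z)^j) * (cbinom ν i' * (-z)^i') *
                  α (M.Y (A.Y u (l:ℤ) v)
                      ((n₂ + ν + X + κ - (l:ℂ) - (t:ℂ)) - ((j + i':ℕ):ℂ)) w) := by
          intro j _
          rw [Finset.mul_sum]
          refine Finset.sum_congr rfl fun i' _ => ?_
          have hc : cbinom κ (t+j) * (((t+j).choose t : ℕ):ℂ)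
              = cbinom κ t * cbinom (κ - (t:ℂ)) j := by
            rw [cbinom_mul_nat κ (t+j) t (Nat.le_add_right t j)]
            congr 2
            omega
          have harg : n₂ + ν + X + κ - (l:ℂ) - ((t+j:ℕ):ℂ) - (i':ℂ)
              = (n₂ + ν + X + κ - (l:ℂ) - (t:ℂ)) - ((j + i':ℕ):ℂ) := by push_cast; ring
          rw [harg, hc, pow_add]
          ring
        rw [Finset.sum_congr rfl hre, ← Finset.mul_sum]
        have hGv : ∀ r:ℕ, Sf l ≤ r →
            α (M.Y (A.Y u (l:ℤ) v)
                ((n₂ + ν + X + κ - (l:ℂ) - (t:ℂ)) - ((r:ℕ):ℂ)) w) = 0 := by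
          intro r hr
          have harg : (n₂ + ν + X + κ - (l:ℂ) - (t:ℂ)) - ((r:ℕ):ℂ)
              = n₂ + ν + X + κ - (l:ℂ) - ((t + r:ℕ):ℂ) := by push_cast; ring
          rw [harg, hSf l (t+r) (le_trans hr (Nat.le_add_left r t)), hα0]
        have hKt : Sf l ≤ K - t := by omega
        have hJt : Sf l ≤ J := le_trans hSfSS hJSS
        have hconv := conv_lemma (fun j => cbinom (κ - (t:ℂ)) j * (-z)^j)
          (fun i' => cbinom ν i' * (-z)^i')
          (fun s => α (M.Y (A.Y u (l:ℤ) v)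
              ((n₂ + ν + X + κ - (l:ℂ) - (t:ℂ)) - ((s:ℕ):ℂ)) w))
          (K - t) J (Sf l) hKt hJt hGv
        rw [hconv]
        have hvdm : ∀ r ∈ range (Sf l), (∑ q ∈ range (r+1),
            (cbinom (κ - (t:ℂ)) q * (-z)^q) * (cbinom ν (r-q) * (-z)^(r-q)))
              * α (M.Y (A.Y u (l:ℤ) v)
                  ((n₂ + ν + X + κ - (l:ℂ) - (t:ℂ)) - ((r:ℕ):ℂ)) w)
            = (cbinom (κ - (t:ℂ) + ν) r * (-z)^r) *
                α (M.Y (A.Y u (l:ℤ) v)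
                    ((n₂ + ν + X + κ - (l:ℂ) - (t:ℂ)) - ((r:ℕ):ℂ)) w) := by
          intro r _
          congr 1
          rw [← cbinom_vandermonde (κ - (t:ℂ)) ν r, Finset.sum_mul]
          refine Finset.sum_congr rfl fun q hq => ?_
          have hqr : q ≤ r := Nat.lt_succ_iff.1 (Finset.mem_range.1 hq)
          have hpow : (-z)^q * (-z)^(r-q) = (-z)^r := by
            rw [← pow_add, Nat.add_sub_cancel' hqr]
          calc (cbinom (κ - (t:ℂ)) q * (-z)^q) * (cbinom ν (r-q) * (-z)^(r-q))
              = (cbinom (κ - (t:ℂ)) q * cbinom ν (r-q)) * ((-z)^q * (-z)^(r-q)) := by ring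
            _ = cbinom (κ - (t:ℂ)) q * cbinom ν (r-q) * (-z)^r := by rw [hpow]
        rw [Finset.sum_congr rfl hvdm]
        have hzero : mulXZ z (κ - (t:ℂ) + ν) (Ydual M.Y (A.Y u (l:ℤ) v) α w)
            (n₂ + X - (l:ℂ)) = 0 := by
          have h0 : (0:ℤ) ≤ (k:ℤ)+n-(t:ℤ) := (hkbig l hlL t htl).2
          have h1 : (((((k:ℤ)+n-(t:ℤ)).toNat : ℕ):ℤ):ℂ) = (((k:ℤ)+n-(t:ℤ) : ℤ):ℂ) := by
            rw [Int.toNat_of_nonneg h0]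
          have ecast : ((((k:ℤ)+n-(t:ℤ)).toNat : ℕ):ℂ) + ((j₁+r₁:ℤ):ℂ)/(T:ℂ)
              = κ - (t:ℂ) + ν := by
            rw [hκdef, hνdef]
            push_cast at h1 ⊢
            rw [h1]
            ring
          have earg : ((p+m-(l:ℤ) : ℤ):ℂ) + ((j₂+r₂:ℤ):ℂ)/(T:ℂ) = n₂ + X - (l:ℂ) := by
            rw [hn₂, hXdef]
            push_cast
            ring
          rw [← ecast, ← earg]
          exact hN₂ l t hlL htl (p+m-(l:ℤ)) (hmN₂ l t hlL htl) w
        have hfinal : mulXZ z (κ - (t:ℂ) + ν) (Ydual M.Y (A.Y u (l:ℤ) v) α w)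
            (n₂ + X - (l:ℂ))
            = ∑ r ∈ range (Sf l), (cbinom (κ - (t:ℂ) + ν) r * (-z)^r) *
                α (M.Y (A.Y u (l:ℤ) v)
                    ((n₂ + ν + X + κ - (l:ℂ) - (t:ℂ)) - ((r:ℕ):ℂ)) w) := by
          rw [mulXZ]
          have hconv2 := finsum_eq_sum_range
            (f := fun r:ℕ => cbinom (κ - (t:ℂ) + ν) r * (-z)^r *
              Ydual M.Y (A.Y u (l:ℤ) v) α w ((n₂ + X - (l:ℂ)) + (κ - (t:ℂ) + ν) - (r:ℂ)))
            (M := Sf l) ?hs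
          case hs =>
            intro r hr
            show cbinom (κ - (t:ℂ) + ν) r * (-z)^r *
              α (M.Y (A.Y u (l:ℤ) v) ((n₂ + X - (l:ℂ)) + (κ - (t:ℂ) + ν) - (r:ℂ)) w) = 0
            have harg : (n₂ + X - (l:ℂ)) + (κ - (t:ℂ) + ν) - (r:ℂ)
                = (n₂ + ν + X + κ - (l:ℂ) - (t:ℂ)) - ((r:ℕ):ℂ) := by push_cast; ring
            rw [harg, hGv r hr, mul_zero]
          rw [hconv2]
          refine Finset.sum_congr rfl fun r _ => ?_
          show cbinom (κ - (t:ℂ) + ν) r * (-z)^r *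
              α (M.Y (A.Y u (l:ℤ) v) ((n₂ + X - (l:ℂ)) + (κ - (t:ℂ) + ν) - (r:ℂ)) w) = _
          have harg : (n₂ + X - (l:ℂ)) + (κ - (t:ℂ) + ν) - (r:ℂ)
              = (n₂ + ν + X + κ - (l:ℂ) - (t:ℂ)) - ((r:ℕ):ℂ) := by push_cast; ring
          rw [harg]
        rw [← hfinal, hzero, mul_zero]
      calc ∑ i ∈ range K, ∑ i' ∈ range J, d t *
            ((cbinom κ i * ((i.choose t : ℕ):ℂ) * (-z)^i) * ((cbinom ν i' * (-z)^i') *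
              α (M.Y (A.Y u (l:ℤ) v)
                  (n₂ + ν + X + κ - (l:ℂ) - (i:ℂ) - (i':ℂ)) w)))
          = d t * ∑ i ∈ range K, ∑ i' ∈ range J,
            ((cbinom κ i * ((i.choose t : ℕ):ℂ) * (-z)^i) * ((cbinom ν i' * (-z)^i') *
              α (M.Y (A.Y u (l:ℤ) v)
                  (n₂ + ν + X + κ - (l:ℂ) - (i:ℂ) - (i':ℂ)) w))) := by
            rw [Finset.mul_sum]
            exact Finset.sum_congr rfl fun i _ => by rw [Finset.mul_sum]
        _ = 0 := by rw [hQ, mul_zero]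
end MainLemma

/-- Lemma 3.4.  Let `α ∈ 𝔇^{(z)}_{σ₁,σ₂}(W)`, `u ∈ V^{(j₁,j₂)}`,
`v ∈ V^{(r₁,r₂)}`, `n ∈ ℤ`.  Then there is `k ∈ ℕ` such that
`(x₁-z)^{k+j₁/T}(x₂-z)^{n+r₁/T} Y_W^*(u,x₁) Y_W^*(v,x₂) α ∈
x₂^{-r₂/T} x₁^{-j₂/T} W^*((x₁))[[x₂,x₂^{-1}]]`;  moreover every coefficient of
`x^{r₂/T}(x-z)^{n+r₁/T} Y_W^*(v,x)α` lies in `𝔇^{(z)}_{σ₁,σ₂}(W)`. -/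
theorem Dspace_double_truncation
    (V : Type*) [AddCommGroup V] [Module ℂ V] (W : Type*) [AddCommGroup W] [Module ℂ W]
    (A : VertexAlg V) (σ₁ σ₂ σ : VAAut A) (T : ℕ) (hT : 0 < T)
    (hσ₁ : ∀ v : V, (⇑σ₁.g)^[T] v = v) (hσ₂ : ∀ v : V, (⇑σ₂.g)^[T] v = v)
    (hcommAut : ∀ v : V, σ₁.g (σ₂.g v) = σ₂.g (σ₁.g v))
    (hσ : ∀ v : V, σ.g (σ₁.g (σ₂.g v)) = v)
    (z : ℂ) (hz : z ≠ 0)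
    (M : RightTwistedModule W A σ T)
    (α : W → ℂ) (hα : α ∈ Dspace σ₁ σ₂ T M.Y z)
    (j₁ j₂ r₁ r₂ : ℤ) (u v : V)
    (hu₁ : eig σ₁ T j₁ u) (hu₂ : eig σ₂ T j₂ u)
    (hv₁ : eig σ₁ T r₁ v) (hv₂ : eig σ₂ T r₂ v)
    (n : ℤ) :
    (∃ k : ℕ,
      -- the double series `(x₁-z)^{k+j₁/T}(x₂-z)^{n+r₁/T} Y_W^*(u,x₁)Y_W^*(v,x₂)α`,
      -- with `H n₁ n₂ w` the coefficient of `x₁^{-n₁-1} x₂^{-n₂-1}` evaluated at `w`: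
      (∀ n₁ n₂ : ℂ,
          ((∀ m : ℤ, n₁ ≠ (j₂ : ℂ) / (T : ℂ) + (m : ℂ)) ∨
            (∀ m : ℤ, n₂ ≠ (r₂ : ℂ) / (T : ℂ) + (m : ℂ))) →
          ∀ w : W,
            (∑ᶠ i : ℕ, cbinom ((k : ℂ) + (j₁ : ℂ) / (T : ℂ)) i * (-z) ^ i *
              mulXZ z ((n : ℂ) + (r₁ : ℂ) / (T : ℂ))
                (Ydual M.Y v α (M.Y u (n₁ + ((k : ℂ) + (j₁ : ℂ) / (T : ℂ)) - (i : ℂ)) w))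
                n₂) = 0) ∧
      (∀ n₂ : ℂ, ∃ N : ℤ, ∀ m : ℤ, N ≤ m → ∀ w : W,
          (∑ᶠ i : ℕ, cbinom ((k : ℂ) + (j₁ : ℂ) / (T : ℂ)) i * (-z) ^ i *
            mulXZ z ((n : ℂ) + (r₁ : ℂ) / (T : ℂ))
              (Ydual M.Y v α (M.Y u (((j₂ : ℂ) / (T : ℂ) + (m : ℂ)) +
                ((k : ℂ) + (j₁ : ℂ) / (T : ℂ)) - (i : ℂ)) w))
              n₂) = 0)) ∧
    -- furthermore: each coefficient of `x^{r₂/T}(x-z)^{n+r₁/T} Y_W^*(v,x)α` lies in `𝔇`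
    (∀ m : ℂ,
      (fun w => mulXZ z ((n : ℂ) + (r₁ : ℂ) / (T : ℂ)) (Ydual M.Y v α w)
          (m + (r₂ : ℂ) / (T : ℂ)))
        ∈ Dspace σ₁ σ₂ T M.Y z) := by
  classical
  have hTC : (T:ℂ) ≠ 0 := Nat.cast_ne_zero.2 hT.ne'
  have hlin := hα.1
  have hα0 : α 0 = 0 := hlin.map_zero
  obtain ⟨k, hk⟩ := main_lemma hT hσ hα hu₁ hu₂ hv₁ hv₂ n
  refine ⟨⟨k, ?_, ?_⟩, ?_⟩
  · -- part (a)
    intro n₁ n₂ hd w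
    rcases hd with hd | hd
    · have harg : ∀ mm : ℤ, n₁ - (j₂:ℂ)/(T:ℂ) ≠ (mm:ℂ) := by
        intro mm he
        exact hd mm (by linear_combination he)
      have h1 := (hk n₂).1 (n₁ - (j₂:ℂ)/(T:ℂ)) harg w
      have e : (n₁ - (j₂:ℂ)/(T:ℂ)) + (j₂:ℂ)/(T:ℂ) = n₁ := by ring
      rw [e] at h1
      exact h1
    · apply finsum_eq_zero_of_forall_eq_zero
      intro i
      have hβ : mulXZ z ((n:ℂ)+(r₁:ℂ)/(T:ℂ))
          (Ydual M.Y v α (M.Y u (n₁ + ((k:ℂ)+(j₁:ℂ)/(T:ℂ)) - (i:ℂ)) w)) n₂ = 0 := by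
        rw [mulXZ]
        apply finsum_eq_zero_of_forall_eq_zero
        intro i'
        have hzero : M.Y v (n₂ + ((n:ℂ)+(r₁:ℂ)/(T:ℂ)) - (i':ℂ))
            (M.Y u (n₁ + ((k:ℂ)+(j₁:ℂ)/(T:ℂ)) - (i:ℂ)) w) = 0 := by
          apply Ysupp hT hσ hv₁ hv₂
          intro q he
          apply hd (q - n + i')
          push_cast at he ⊢
          linear_combination he
        show cbinom ((n:ℂ)+(r₁:ℂ)/(T:ℂ)) i' * (-z)^i' *
            α (M.Y v (n₂ + ((n:ℂ)+(r₁:ℂ)/(T:ℂ)) - (i':ℂ))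
              (M.Y u (n₁ + ((k:ℂ)+(j₁:ℂ)/(T:ℂ)) - (i:ℂ)) w)) = 0
        rw [hzero, hα0, mul_zero]
      rw [hβ, mul_zero]
  · -- part (b)
    intro n₂
    obtain ⟨N, hN⟩ := (hk n₂).2
    refine ⟨N, fun m hm w => ?_⟩
    have h := hN m hm w
    have e : (m:ℂ) + (j₂:ℂ)/(T:ℂ) = (j₂:ℂ)/(T:ℂ) + (m:ℂ) := by ring
    rw [e] at h
    exact h
  · -- part (c)
    intro m
    refine ⟨?_, ?_⟩
    · -- linearity
      constructor
      · intro w w'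
        obtain ⟨B1, hB1⟩ := lowvanish (M := M) hT v w
          (m + (r₂:ℂ)/(T:ℂ) + ((n:ℂ)+(r₁:ℂ)/(T:ℂ)))
        obtain ⟨B2, hB2⟩ := lowvanish (M := M) hT v w'
          (m + (r₂:ℂ)/(T:ℂ) + ((n:ℂ)+(r₁:ℂ)/(T:ℂ)))
        have e1 : mulXZ z ((n:ℂ)+(r₁:ℂ)/(T:ℂ)) (Ydual M.Y v α (w+w')) (m + (r₂:ℂ)/(T:ℂ))
            = ∑ i' ∈ Finset.range (max B1 B2), cbinom ((n:ℂ)+(r₁:ℂ)/(T:ℂ)) i' * (-z)^i' *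
                α (M.Y v (m + (r₂:ℂ)/(T:ℂ) + ((n:ℂ)+(r₁:ℂ)/(T:ℂ)) - (i':ℂ)) (w+w')) := by
          rw [mulXZ]
          apply finsum_eq_sum_range
          intro i' hi'
          show cbinom ((n:ℂ)+(r₁:ℂ)/(T:ℂ)) i' * (-z)^i' *
              α (M.Y v (m + (r₂:ℂ)/(T:ℂ) + ((n:ℂ)+(r₁:ℂ)/(T:ℂ)) - (i':ℂ)) (w+w')) = 0
          rw [map_add, hB1 i' (le_trans (le_max_left _ _) hi'),
            hB2 i' (le_trans (le_max_right _ _) hi'), add_zero, hα0, mul_zero]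
        have e2 : mulXZ z ((n:ℂ)+(r₁:ℂ)/(T:ℂ)) (Ydual M.Y v α w) (m + (r₂:ℂ)/(T:ℂ))
            = ∑ i' ∈ Finset.range (max B1 B2), cbinom ((n:ℂ)+(r₁:ℂ)/(T:ℂ)) i' * (-z)^i' *
                α (M.Y v (m + (r₂:ℂ)/(T:ℂ) + ((n:ℂ)+(r₁:ℂ)/(T:ℂ)) - (i':ℂ)) w) := by
          rw [mulXZ]
          apply finsum_eq_sum_range
          intro i' hi'
          show cbinom ((n:ℂ)+(r₁:ℂ)/(T:ℂ)) i' * (-z)^i' *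
              α (M.Y v (m + (r₂:ℂ)/(T:ℂ) + ((n:ℂ)+(r₁:ℂ)/(T:ℂ)) - (i':ℂ)) w) = 0
          rw [hB1 i' (le_trans (le_max_left _ _) hi'), hα0, mul_zero]
        have e3 : mulXZ z ((n:ℂ)+(r₁:ℂ)/(T:ℂ)) (Ydual M.Y v α w') (m + (r₂:ℂ)/(T:ℂ))
            = ∑ i' ∈ Finset.range (max B1 B2), cbinom ((n:ℂ)+(r₁:ℂ)/(T:ℂ)) i' * (-z)^i' *
                α (M.Y v (m + (r₂:ℂ)/(T:ℂ) + ((n:ℂ)+(r₁:ℂ)/(T:ℂ)) - (i':ℂ)) w') := by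
          rw [mulXZ]
          apply finsum_eq_sum_range
          intro i' hi'
          show cbinom ((n:ℂ)+(r₁:ℂ)/(T:ℂ)) i' * (-z)^i' *
              α (M.Y v (m + (r₂:ℂ)/(T:ℂ) + ((n:ℂ)+(r₁:ℂ)/(T:ℂ)) - (i':ℂ)) w') = 0
          rw [hB2 i' (le_trans (le_max_right _ _) hi'), hα0, mul_zero]
        show mulXZ z ((n:ℂ)+(r₁:ℂ)/(T:ℂ)) (Ydual M.Y v α (w+w')) (m + (r₂:ℂ)/(T:ℂ))
            = mulXZ z ((n:ℂ)+(r₁:ℂ)/(T:ℂ)) (Ydual M.Y v α w) (m + (r₂:ℂ)/(T:ℂ))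
              + mulXZ z ((n:ℂ)+(r₁:ℂ)/(T:ℂ)) (Ydual M.Y v α w') (m + (r₂:ℂ)/(T:ℂ))
        rw [e1, e2, e3, ← Finset.sum_add_distrib]
        refine Finset.sum_congr rfl fun i' _ => ?_
        rw [map_add, hlin.map_add]
        ring
      · intro a w
        obtain ⟨B1, hB1⟩ := lowvanish (M := M) hT v w
          (m + (r₂:ℂ)/(T:ℂ) + ((n:ℂ)+(r₁:ℂ)/(T:ℂ)))
        have e1 : mulXZ z ((n:ℂ)+(r₁:ℂ)/(T:ℂ)) (Ydual M.Y v α (a • w)) (m + (r₂:ℂ)/(T:ℂ))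
            = ∑ i' ∈ Finset.range B1, cbinom ((n:ℂ)+(r₁:ℂ)/(T:ℂ)) i' * (-z)^i' *
                α (M.Y v (m + (r₂:ℂ)/(T:ℂ) + ((n:ℂ)+(r₁:ℂ)/(T:ℂ)) - (i':ℂ)) (a • w)) := by
          rw [mulXZ]
          apply finsum_eq_sum_range
          intro i' hi'
          show cbinom ((n:ℂ)+(r₁:ℂ)/(T:ℂ)) i' * (-z)^i' *
              α (M.Y v (m + (r₂:ℂ)/(T:ℂ) + ((n:ℂ)+(r₁:ℂ)/(T:ℂ)) - (i':ℂ)) (a • w)) = 0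
          rw [map_smul, hB1 i' hi', smul_zero, hα0, mul_zero]
        have e2 : mulXZ z ((n:ℂ)+(r₁:ℂ)/(T:ℂ)) (Ydual M.Y v α w) (m + (r₂:ℂ)/(T:ℂ))
            = ∑ i' ∈ Finset.range B1, cbinom ((n:ℂ)+(r₁:ℂ)/(T:ℂ)) i' * (-z)^i' *
                α (M.Y v (m + (r₂:ℂ)/(T:ℂ) + ((n:ℂ)+(r₁:ℂ)/(T:ℂ)) - (i':ℂ)) w) := by
          rw [mulXZ]
          apply finsum_eq_sum_range
          intro i' hi'
          show cbinom ((n:ℂ)+(r₁:ℂ)/(T:ℂ)) i' * (-z)^i' *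
              α (M.Y v (m + (r₂:ℂ)/(T:ℂ) + ((n:ℂ)+(r₁:ℂ)/(T:ℂ)) - (i':ℂ)) w) = 0
          rw [hB1 i' hi', hα0, mul_zero]
        show mulXZ z ((n:ℂ)+(r₁:ℂ)/(T:ℂ)) (Ydual M.Y v α (a • w)) (m + (r₂:ℂ)/(T:ℂ))
            = a • mulXZ z ((n:ℂ)+(r₁:ℂ)/(T:ℂ)) (Ydual M.Y v α w) (m + (r₂:ℂ)/(T:ℂ))
        rw [e1, e2, smul_eq_mul, Finset.mul_sum]
        refine Finset.sum_congr rfl fun i' _ => ?_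
        rw [map_smul, hlin.map_smul, smul_eq_mul]
        ring
    · intro p₁ p₂ s hs₁ hs₂
      obtain ⟨k', hk'⟩ := main_lemma hT hσ hα hs₁ hs₂ hv₁ hv₂ n
      exact ⟨k', hk' (m + (r₂:ℂ)/(T:ℂ))⟩
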